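/- arXiv:1705.02890 — 2 statements merged into one kernel-verified Lean document; each statement's English description precedes it below -/
import Mathlib

section
/- Let μ be the measure on the upper half-plane {z ∈ ℂ : Im z > 0} with density (Im z)⁻² with respect to 2-dimensional Lebesgue measure. For all ℓ > 0 and h > 0, the μ-measure of the set {z : Im z > 0, 1 ≤ |z| ≤ exp ℓ, Re z ≥ 0, |z| ≤ cosh(h) · Im z} equals ℓ · sinh(h). -/
open MeasureTheory

/-- The hyperbolic area measure on ℂ (supported meaningfully on the upper half-plane):
density `(Im z)⁻²` with respect to 2-dimensional Lebesgue measure. -/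
noncomputable def hypArea : Measure ℂ :=
  volume.withDensity fun z => ENNReal.ofReal ((z.im) ^ 2)⁻¹

open Real Set in
theorem my_lintegral_comp_polarCoord_symm (f : ℝ × ℝ → ENNReal) :
    (∫⁻ p in polarCoord.target, ENNReal.ofReal p.1 * f (polarCoord.symm p)) = ∫⁻ p, f p := by
  set B : ℝ × ℝ → ℝ × ℝ →L[ℝ] ℝ × ℝ := fun p =>
    LinearMap.toContinuousLinearMap (Matrix.toLin (Module.Basis.finTwoProd ℝ) (Module.Basis.finTwoProd ℝ)
      !![cos p.2, -p.1 * sin p.2; sin p.2, p.1 * cos p.2])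
  have A : ∀ p ∈ polarCoord.target,
      HasFDerivWithinAt polarCoord.symm (B p) polarCoord.target p :=
    fun p _ => (hasFDerivAt_polarCoord_symm p).hasFDerivWithinAt
  have B_det : ∀ p, (B p).det = p.1 := by
    intro p
    conv_rhs => rw [← one_mul p.1, ← cos_sq_add_sin_sq p.2]
    simp only [B, neg_mul, LinearMap.det_toContinuousLinearMap, LinearMap.det_toLin,
      Matrix.det_fin_two_of, sub_neg_eq_add]
    ring
  have hinj : Set.InjOn polarCoord.symm polarCoord.target := by
    have := polarCoord.symm.injOn
    rwa [OpenPartialHomeomorph.symm_source] at this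
  symm
  calc
    ∫⁻ p, f p = ∫⁻ p in polarCoord.source, f p := by
      rw [← setLIntegral_univ]
      exact setLIntegral_congr polarCoord_source_ae_eq_univ.symm
    _ = ∫⁻ p in polarCoord.symm '' polarCoord.target, f p := by
      rw [polarCoord.symm_image_target_eq_source]
    _ = ∫⁻ p in polarCoord.target, ENNReal.ofReal |(B p).det| * f (polarCoord.symm p) :=
      lintegral_image_eq_lintegral_abs_det_fderiv_mul volume
        polarCoord.open_target.measurableSet A hinj f
    _ = ∫⁻ p in polarCoord.target, ENNReal.ofReal p.1 * f (polarCoord.symm p) := by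
      apply setLIntegral_congr_fun polarCoord.open_target.measurableSet
      intro p hp
      dsimp only
      rw [B_det, abs_of_pos hp.1]

theorem my_Complex_lintegral_comp_polarCoord_symm (f : ℂ → ENNReal) :
    (∫⁻ p in polarCoord.target, ENNReal.ofReal p.1 * f (Complex.polarCoord.symm p)) =
      ∫⁻ z, f z := by
  rw [← (Complex.volume_preserving_equiv_real_prod.symm).lintegral_comp_emb
    Complex.measurableEquivRealProd.symm.measurableEmbedding f,
    ← my_lintegral_comp_polarCoord_symm]
  rfl

open Real Set in
set_option maxHeartbeats 1000000 in
theorem stmt8 (ℓ h : ℝ) (hℓ : 0 < ℓ) (hh : 0 < h) :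
    hypArea {z : ℂ | 0 < z.im ∧ 1 ≤ ‖z‖ ∧ ‖z‖ ≤ Real.exp ℓ ∧
        0 ≤ z.re ∧ ‖z‖ ≤ Real.cosh h * z.im} =
      ENNReal.ofReal (ℓ * Real.sinh h) := by
  have hcoshpos : 0 < Real.cosh h := Real.cosh_pos h
  have hcosh : 1 < Real.cosh h := Real.one_lt_cosh.mpr hh.ne'
  have hsinh : 0 < Real.sinh h := Real.sinh_pos_iff.mpr hh
  set c : ℝ := (Real.cosh h)⁻¹ with hc
  have hc0 : 0 < c := by positivity
  have hc1 : c < 1 := by rw [hc, inv_lt_one_iff₀]; right; exact hcosh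
  set θh : ℝ := Real.arcsin c with hθ
  have hθ0 : 0 < θh := Real.arcsin_pos.mpr hc0
  have hθlt : θh < π / 2 := Real.arcsin_lt_pi_div_two.mpr hc1
  have hsinθh : Real.sin θh = c := Real.sin_arcsin (by linarith) hc1.le
  have hcosθh : Real.cos θh = Real.sinh h * c := by
    rw [hθ, Real.cos_arcsin]
    have h1 : 1 - c ^ 2 = (Real.sinh h * c) ^ 2 := by
      have h2 : Real.cosh h ^ 2 = Real.sinh h ^ 2 + 1 := Real.cosh_sq h
      field_simp [hc]
      have hck : c * Real.cosh h = 1 := by rw [hc]; field_simp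
      linear_combination (-(c * Real.cosh h) - 1) * hck + c ^ 2 * h2
    rw [h1, Real.sqrt_sq (by positivity)]
  have hsinge : ∀ θ ∈ Icc θh (π / 2), c ≤ Real.sin θ := by
    intro θ hθmem
    have : Real.sin θh ≤ Real.sin θ :=
      Real.strictMonoOn_sin.monotoneOn ⟨by linarith, hθlt.le⟩
        ⟨by linarith [hθmem.1], hθmem.2⟩ hθmem.1
    rw [hsinθh] at this; exact this
  have hsinpos : ∀ θ ∈ Icc θh (π / 2), 0 < Real.sin θ :=
    fun θ hθmem => lt_of_lt_of_le hc0 (hsinge θ hθmem)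
  -- the θ integral
  have hcont : ContinuousOn (fun θ : ℝ => (Real.sin θ ^ 2)⁻¹) (Icc θh (π / 2)) := by
    apply ContinuousOn.inv₀ (by fun_prop)
    exact fun θ hθmem => pow_ne_zero 2 (hsinpos θ hθmem).ne'
  have hIntθ : IntegrableOn (fun θ : ℝ => (Real.sin θ ^ 2)⁻¹) (Icc θh (π / 2)) volume :=
    hcont.integrableOn_compact isCompact_Icc
  have Iθ : ∫⁻ θ in Icc θh (π / 2), ENNReal.ofReal ((Real.sin θ ^ 2)⁻¹) =
      ENNReal.ofReal (Real.sinh h) := by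
    rw [← ofReal_integral_eq_lintegral_ofReal hIntθ
      (Filter.Eventually.of_forall fun θ => by positivity)]
    congr 1
    rw [MeasureTheory.integral_Icc_eq_integral_Ioc, ← intervalIntegral.integral_of_le hθlt.le]
    have hFTC : ∫ θ in θh..(π / 2), (Real.sin θ ^ 2)⁻¹ =
        (-(Real.cos (π/2) / Real.sin (π/2))) - (-(Real.cos θh / Real.sin θh)) := by
      apply intervalIntegral.integral_eq_sub_of_hasDerivAt
        (f := fun θ => -(Real.cos θ / Real.sin θ))
      · intro θ hθmem
        rw [uIcc_of_le hθlt.le] at hθmem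
        have hs := (hsinpos θ hθmem).ne'
        have hd := ((Real.hasDerivAt_cos θ).div (Real.hasDerivAt_sin θ) hs).neg
        convert hd using 1
        · rfl
        have h1 := Real.sin_sq_add_cos_sq θ
        have h3 : -Real.sin θ * Real.sin θ - Real.cos θ * Real.cos θ = -1 := by
          linear_combination -h1
        rw [h3]
        ring
      · rw [intervalIntegrable_iff_integrableOn_Icc_of_le hθlt.le]
        exact hIntθ
    rw [hFTC, Real.cos_pi_div_two, Real.sin_pi_div_two, hcosθh, hsinθh]
    field_simp
    ring
  -- the r integral
  have hexp1 : (1:ℝ) ≤ Real.exp ℓ := Real.one_le_exp hℓ.le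
  have hIntr : IntegrableOn (fun r : ℝ => r⁻¹) (Icc 1 (Real.exp ℓ)) volume := by
    apply ContinuousOn.integrableOn_compact isCompact_Icc
    exact ContinuousOn.inv₀ continuousOn_id (fun r hr => by nlinarith [hr.1])
  have Ir : ∫⁻ r in Icc (1:ℝ) (Real.exp ℓ), ENNReal.ofReal r⁻¹ = ENNReal.ofReal ℓ := by
    rw [← ofReal_integral_eq_lintegral_ofReal hIntr
      ((ae_restrict_iff' measurableSet_Icc).mpr
        (Filter.Eventually.of_forall fun r hr => inv_nonneg.mpr (le_trans zero_le_one hr.1)))]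
    congr 1
    rw [MeasureTheory.integral_Icc_eq_integral_Ioc, ← intervalIntegral.integral_of_le hexp1,
      integral_inv_of_pos one_pos (Real.exp_pos ℓ), div_one, Real.log_exp]
  -- the set and its measurability
  set S : Set ℂ := {z : ℂ | 0 < z.im ∧ 1 ≤ ‖z‖ ∧ ‖z‖ ≤ Real.exp ℓ ∧
        0 ≤ z.re ∧ ‖z‖ ≤ Real.cosh h * z.im} with hSdef
  have hSmeas : MeasurableSet S := by
    apply MeasurableSet.inter (measurableSet_lt measurable_const Complex.measurable_im)
    apply MeasurableSet.inter (measurableSet_le measurable_const continuous_norm.measurable)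
    apply MeasurableSet.inter (measurableSet_le continuous_norm.measurable measurable_const)
    exact MeasurableSet.inter (measurableSet_le measurable_const Complex.measurable_re)
      (measurableSet_le continuous_norm.measurable (Complex.measurable_im.const_mul _))
  set T : Set (ℝ × ℝ) := Icc (1:ℝ) (Real.exp ℓ) ×ˢ Icc θh (π / 2) with hTdef
  have hTmeas : MeasurableSet T := measurableSet_Icc.prod measurableSet_Icc
  have hTsub : T ⊆ polarCoord.target := by
    rintro ⟨r, θ⟩ ⟨hr, hθmem⟩
    refine ⟨by simp only [mem_Ioi]; linarith [hr.1], ?_⟩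
    simp only [mem_Ioo]
    constructor <;> nlinarith [hθmem.1, hθmem.2, Real.pi_pos]
  set G : ℝ × ℝ → ENNReal := fun p => ENNReal.ofReal (p.1⁻¹ * (Real.sin p.2 ^ 2)⁻¹) with hGdef
  have hGmeas : Measurable G := by
    apply Measurable.ennreal_ofReal
    exact (measurable_fst.inv.mul ((Real.measurable_sin.comp measurable_snd).pow_const 2).inv)
  -- key pointwise identity on the target
  have hKey : ∀ p ∈ polarCoord.target,
      ENNReal.ofReal p.1 *
        (S.indicator (fun z => ENNReal.ofReal ((z.im ^ 2)⁻¹)) (Complex.polarCoord.symm p)) =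
      T.indicator G p := by
    rintro ⟨r, θ⟩ hp
    rw [polarCoord_target] at hp
    obtain ⟨hr0, hθmem⟩ := hp
    rw [mem_Ioi] at hr0
    rw [mem_Ioo] at hθmem
    have him : (Complex.polarCoord.symm (r, θ)).im = r * Real.sin θ := by
      simp [Complex.polarCoord_symm_apply]
      exact Or.inl (Complex.sin_ofReal_re θ)
    have hre : (Complex.polarCoord.symm (r, θ)).re = r * Real.cos θ := by
      simp [Complex.polarCoord_symm_apply]
      exact Or.inl (Complex.cos_ofReal_re θ)
    have habs : ‖Complex.polarCoord.symm (r, θ)‖ = r := by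
      rw [Complex.norm_polarCoord_symm, abs_of_pos hr0]
    have hiff : Complex.polarCoord.symm (r, θ) ∈ S ↔ (r, θ) ∈ T := by
      constructor
      · rintro ⟨h1, h2, h3, h4, h5⟩
        rw [him] at h1 h5
        rw [hre] at h4
        rw [habs] at h2 h3 h5
        have hsθ : 0 < Real.sin θ := by nlinarith
        have hcθ : 0 ≤ Real.cos θ := by nlinarith
        have hcs : 1 ≤ Real.cosh h * Real.sin θ := by nlinarith
        have h7 : c ≤ Real.sin θ := by
          rw [hc, inv_le_iff_one_le_mul₀' hcoshpos]; exact hcs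
        have hθpos : 0 < θ := by
          by_contra hcon
          push_neg at hcon
          have := Real.sin_nonpos_of_nonpos_of_neg_pi_le hcon hθmem.1.le
          linarith
        have hθle : θ ≤ π / 2 := by
          by_contra hcon
          push_neg at hcon
          have := Real.cos_neg_of_pi_div_two_lt_of_lt hcon (by linarith [Real.pi_pos, hθmem.2])
          linarith
        refine ⟨⟨h2, h3⟩, ?_, hθle⟩
        calc θh = Real.arcsin c := hθ
          _ ≤ Real.arcsin (Real.sin θ) := Real.monotone_arcsin h7
          _ = θ := Real.arcsin_sin (by linarith) hθle
      · rintro ⟨hrmem, hθmem2⟩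
        have hsge := hsinge θ hθmem2
        have hcθ : 0 ≤ Real.cos θ :=
          Real.cos_nonneg_of_mem_Icc ⟨by linarith [hθmem2.1], hθmem2.2⟩
        have hone : 1 ≤ Real.cosh h * Real.sin θ := by
          rw [← mul_inv_cancel₀ hcoshpos.ne']
          exact mul_le_mul_of_nonneg_left hsge hcoshpos.le
        refine ⟨?_, ?_, ?_, ?_, ?_⟩
        · rw [him]
          have hsθ : 0 < Real.sin θ := lt_of_lt_of_le hc0 hsge
          nlinarith [hrmem.1]
        · rw [habs]; exact hrmem.1
        · rw [habs]; exact hrmem.2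
        · rw [hre]
          have h1r : (0:ℝ) ≤ r := le_trans zero_le_one hrmem.1
          positivity
        · rw [habs, him]; nlinarith [hrmem.1]
    by_cases hmem : (r, θ) ∈ T
    · rw [Set.indicator_of_mem (hiff.mpr hmem), Set.indicator_of_mem hmem, him,
        ← ENNReal.ofReal_mul hr0.le, hGdef]
      congr 1
      have hsθ : Real.sin θ ≠ 0 := (hsinpos θ hmem.2).ne'
      field_simp
    · rw [Set.indicator_of_notMem (fun hx => hmem (hiff.mp hx)),
        Set.indicator_of_notMem hmem, mul_zero]
  -- assemble
  calc hypArea S = ∫⁻ z in S, ENNReal.ofReal ((z.im ^ 2)⁻¹) ∂volume :=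
        withDensity_apply _ hSmeas
    _ = ∫⁻ z, S.indicator (fun z => ENNReal.ofReal ((z.im ^ 2)⁻¹)) z := by
        rw [lintegral_indicator hSmeas]
    _ = ∫⁻ p in polarCoord.target, ENNReal.ofReal p.1 *
          (S.indicator (fun z => ENNReal.ofReal ((z.im ^ 2)⁻¹)) (Complex.polarCoord.symm p)) :=
        (my_Complex_lintegral_comp_polarCoord_symm _).symm
    _ = ∫⁻ p in polarCoord.target, T.indicator G p := by
        apply setLIntegral_congr_fun polarCoord.open_target.measurableSet
        exact hKey
    _ = ∫⁻ p in T, G p := by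
        rw [lintegral_indicator hTmeas, Measure.restrict_restrict hTmeas,
          inter_eq_left.mpr hTsub]
    _ = ∫⁻ r in Icc (1:ℝ) (Real.exp ℓ), ∫⁻ θ in Icc θh (π / 2), G (r, θ) := by
        rw [hTdef, Measure.volume_eq_prod, ← Measure.prod_restrict]
        exact lintegral_prod G hGmeas.aemeasurable
    _ = ∫⁻ r in Icc (1:ℝ) (Real.exp ℓ), ENNReal.ofReal r⁻¹ * ENNReal.ofReal (Real.sinh h) := by
        apply setLIntegral_congr_fun measurableSet_Icc
        intro r hr
        have hr0 : (0:ℝ) ≤ r⁻¹ := by have := hr.1; positivity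
        calc ∫⁻ θ in Icc θh (π / 2), G (r, θ)
            = ∫⁻ θ in Icc θh (π / 2), ENNReal.ofReal r⁻¹ *
                ENNReal.ofReal ((Real.sin θ ^ 2)⁻¹) := by
              apply lintegral_congr fun θ => ?_
              rw [hGdef]
              exact ENNReal.ofReal_mul hr0
          _ = ENNReal.ofReal r⁻¹ * ENNReal.ofReal (Real.sinh h) := by
              rw [lintegral_const_mul' _ _ ENNReal.ofReal_ne_top, Iθ]
    _ = (∫⁻ r in Icc (1:ℝ) (Real.exp ℓ), ENNReal.ofReal r⁻¹) * ENNReal.ofReal (Real.sinh h) :=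
        lintegral_mul_const' _ _ ENNReal.ofReal_ne_top
    _ = ENNReal.ofReal (ℓ * Real.sinh h) := by
        rw [Ir, ← ENNReal.ofReal_mul hℓ.le]
end

section
/- Let E = ℝⁿ (or any finite-dimensional real normed space), let Z ⊆ E be open, let S ⊆ E, and let x ∈ convexHull(S) with x ∉ Z. Then x ∈ convexHull((S \ Z) ∪ frontier(Z)). -/
open Set

theorem stmt9 {E : Type*} [NormedAddCommGroup E] [NormedSpace ℝ E]
    [FiniteDimensional ℝ E] (Z S : Set E) (hZ : IsOpen Z) (x : E)
    (hx : x ∈ convexHull ℝ S) (hxZ : x ∉ Z) :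
    x ∈ convexHull ℝ ((S \ Z) ∪ frontier Z) := by
  classical
  set T := (S \ Z) ∪ frontier Z with hT
  by_cases hxc : x ∈ closure Z
  · exact subset_convexHull ℝ T (Or.inr (by rw [hZ.frontier_eq]; exact ⟨hxc, hxZ⟩))
  -- key: for every a, there is t ∈ (0,1] with x + t•(a-x) ∈ T whenever a ∈ S
  have key : ∀ a : E, ∃ t : ℝ, 0 < t ∧ t ≤ 1 ∧ (a ∈ S → x + t • (a - x) ∈ T) := by
    intro a
    by_cases haZ : a ∈ Z
    · set φ : ℝ → E := fun t => x + t • (a - x) with hφdef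
      have hφ : Continuous φ := by fun_prop
      set A : Set ℝ := {t | t ∈ Icc (0:ℝ) 1 ∧ φ t ∈ Z} with hA
      have hφ1 : φ 1 = a := by simp [hφdef]
      have h1A : (1:ℝ) ∈ A := ⟨⟨zero_le_one, le_refl 1⟩, by rw [hφ1]; exact haZ⟩
      have hbdd : BddBelow A := ⟨0, fun t ht => ht.1.1⟩
      set t0 := sInf A with ht0def
      have ht0_le : t0 ≤ 1 := csInf_le hbdd h1A
      -- positive lower bound
      have hx_open : IsOpen (φ ⁻¹' (closure Z)ᶜ) := isClosed_closure.isOpen_compl.preimage hφ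
      have h0mem : (0:ℝ) ∈ φ ⁻¹' (closure Z)ᶜ := by
        simp only [mem_preimage, mem_compl_iff, hφdef]
        simpa using hxc
      obtain ⟨ε, hε, hball⟩ := Metric.isOpen_iff.1 hx_open 0 h0mem
      have hε' : ∀ t ∈ A, ε ≤ t := by
        intro t ht
        by_contra h
        push_neg at h
        have hb : t ∈ Metric.ball (0:ℝ) ε := by
          simp only [Metric.mem_ball, Real.dist_eq, sub_zero, abs_of_nonneg ht.1.1]
          exact h
        exact (hball hb) (subset_closure ht.2)
      have ht0_pos : 0 < t0 := lt_of_lt_of_le hε (le_csInf ⟨1, h1A⟩ hε')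
      have hmemcl : φ t0 ∈ closure Z := by
        have h1 : t0 ∈ closure A := csInf_mem_closure ⟨1, h1A⟩ hbdd
        have h2 : t0 ∈ closure (φ ⁻¹' Z) := closure_mono (fun t ht => ht.2) h1
        exact map_mem_closure hφ h2 (fun t ht => ht)
      have hnot : φ t0 ∉ Z := by
        intro hmem
        obtain ⟨δ, hδ, hb⟩ := Metric.isOpen_iff.1 (hZ.preimage hφ) t0 hmem
        set s := t0 - min (δ/2) (t0/2) with hs
        have hmin_pos : 0 < min (δ/2) (t0/2) := lt_min (by linarith) (by linarith)
        have hsball : s ∈ Metric.ball t0 δ := by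
          simp only [Metric.mem_ball, Real.dist_eq, hs]
          rw [abs_of_nonpos (by linarith [hmin_pos])]
          have := min_le_left (δ/2) (t0/2)
          linarith
        have hsA : s ∈ A := by
          refine ⟨⟨?_, ?_⟩, hb hsball⟩
          · have := min_le_right (δ/2) (t0/2); simp only [hs]; linarith
          · have := hmin_pos; simp only [hs]; linarith
        have := csInf_le hbdd hsA
        simp only [hs] at this
        linarith
      exact ⟨t0, ht0_pos, ht0_le, fun _ =>
        Or.inr (by rw [hZ.frontier_eq]; exact ⟨hmemcl, hnot⟩)⟩
    · exact ⟨1, one_pos, le_refl 1, fun haS => Or.inl ⟨by simpa using haS, by simpa using haZ⟩⟩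
  choose τ hτ0 hτ1 hτT using key
  rw [convexHull_eq] at hx
  obtain ⟨ι, t, w, z, hw0, hw1, hzS, hcm⟩ := hx
  -- new weights and points
  set v : ι → ℝ := fun i => w i / τ (z i) with hv
  set p : ι → E := fun i => x + τ (z i) • (z i - x) with hp
  have hv0 : ∀ i ∈ t, 0 ≤ v i := fun i hi => div_nonneg (hw0 i hi) (hτ0 (z i)).le
  have hvs : 0 < ∑ i ∈ t, v i := by
    obtain ⟨i, hi, hwi⟩ : ∃ i ∈ t, 0 < w i := by
      by_contra h
      push_neg at h
      have : ∑ i ∈ t, w i ≤ 0 := Finset.sum_nonpos (fun i hi => h i hi)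
      linarith [hw1 ▸ this]
    exact Finset.sum_pos' hv0 ⟨i, hi, div_pos hwi (hτ0 (z i))⟩
  have hsum : ∑ i ∈ t, w i • z i = x := by
    rw [← hcm, Finset.centerMass_eq_of_sum_1 _ _ hw1]
  have hx' : t.centerMass v p = x := by
    rw [Finset.centerMass]
    have hterm : ∀ i ∈ t, v i • p i = v i • x + w i • z i - w i • x := by
      intro i hi
      simp only [hp, hv, smul_add, smul_sub, smul_smul,
        div_mul_cancel₀ (w i) (hτ0 (z i)).ne']
      abel
    rw [Finset.sum_congr rfl hterm]
    rw [Finset.sum_sub_distrib, Finset.sum_add_distrib, ← Finset.sum_smul, hsum,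
      ← Finset.sum_smul, hw1, one_smul]
    rw [add_sub_cancel_right, inv_smul_smul₀ hvs.ne']
  rw [← hx']
  exact Finset.centerMass_mem_convexHull t hv0 hvs (fun i hi => hτT (z i) (hzS i hi))
end
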